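/- An element ε ∈ IS_n satisfies ε·α·ε = ε if and only if dom(ε) ⊆ ran(α) and ε(x) = α⁻¹(x) for all x ∈ dom(ε); hence the idempotents of (IS_n, *_α) are in bijection with the subsets of ran(α). -/

import Mathlib

/-- `PInj n` : the symmetric inverse semigroup `IS_n`, modeled as partial
injective maps `Fin n → Option (Fin n)`. -/
abbrev PInj (n : ℕ) : Type :=
  {f : Fin n → Option (Fin n) // ∀ x y z : Fin n, f x = some z → f y = some z → x = y}

/-- Composition, applying `f` first, then `g` (left-to-right, as in the paper). -/
def PInj.comp {n : ℕ} (f g : PInj n) : PInj n :=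
  ⟨fun x => (f.1 x).bind g.1, by
    intro x y z hx hy
    rcases Option.bind_eq_some_iff.mp hx with ⟨w, hfw, hgw⟩
    rcases Option.bind_eq_some_iff.mp hy with ⟨v, hfv, hgv⟩
    cases g.2 w v z hgw hgv
    exact f.2 x y w hfw hfv⟩

/-- The deformed multiplication `x *_α y = x · α · y` on `PInj n`. -/
def PInj.dmul {n : ℕ} (α x y : PInj n) : PInj n := (x.comp α).comp y

/-- The range (image) of a partial injection. -/
def PInj.ran {n : ℕ} (f : PInj n) : Set (Fin n) := {y | ∃ x, f.1 x = some y}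

/-- The domain of a partial injection. -/
def PInj.dom {n : ℕ} (f : PInj n) : Set (Fin n) := {x | (f.1 x).isSome}

/-- The rank of a partial injection: the cardinality of its range. -/
noncomputable def PInj.rank {n : ℕ} (f : PInj n) : ℕ := f.ran.ncard

/-- The permutation `σ ∈ S_n` viewed as an element of `IS_n`. -/
def PInj.ofPerm {n : ℕ} (σ : Equiv.Perm (Fin n)) : PInj n :=
  ⟨fun x => some (σ x), by
    intro x y z hx hy
    exact σ.injective ((Option.some.inj hx).trans (Option.some.inj hy).symm)⟩


/-- pointwise inverse of a partial injection -/
noncomputable def pinv {n : ℕ} (α : PInj n) (x : Fin n) : Option (Fin n) :=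
  if h : ∃ y, α.1 y = some x then some h.choose else none

lemma pinv_spec {n : ℕ} (α : PInj n) {x y : Fin n} (h : pinv α x = some y) :
    α.1 y = some x := by
  unfold pinv at h
  split at h
  · rename_i he
    cases h
    exact he.choose_spec
  · simp at h

lemma pinv_eq {n : ℕ} (α : PInj n) {x y : Fin n} (h : α.1 y = some x) :
    pinv α x = some y := by
  have he : ∃ y, α.1 y = some x := ⟨y, h⟩
  unfold pinv
  rw [dif_pos he]
  exact congrArg some (α.2 _ _ _ he.choose_spec h)

open Classical in
/-- restriction of `α⁻¹` to a set `A` -/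
noncomputable def restr {n : ℕ} (α : PInj n) (A : Set (Fin n)) : PInj n :=
  ⟨fun x => if x ∈ A then pinv α x else none, by
    intro x y z hx hy
    dsimp only at hx hy
    split at hx
    · split at hy
      · have h1 := pinv_spec α hx
        have h2 := pinv_spec α hy
        exact Option.some.inj (h1 ▸ h2)
      · simp at hy
    · simp at hx⟩

/-- `ε · α · ε = ε` iff `dom ε ⊆ ran α` and `ε` agrees with `α⁻¹` on its domain
(i.e. `ε x = some y → α y = some x`); hence the idempotents of `(IS_n, *_α)`
are in bijection with the subsets of `ran α`. -/
theorem idempotent_iff_and_equiv_powerset (n : ℕ) (α : PInj n) :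
    (∀ ε : PInj n,
      PInj.dmul α ε ε = ε ↔
        ε.dom ⊆ α.ran ∧ ∀ x y : Fin n, ε.1 x = some y → α.1 y = some x) ∧
    Nonempty ({ε : PInj n // PInj.dmul α ε ε = ε} ≃ {A : Set (Fin n) // A ⊆ α.ran}) := by
  classical
  have key : ∀ ε : PInj n,
      PInj.dmul α ε ε = ε ↔
        ε.dom ⊆ α.ran ∧ ∀ x y : Fin n, ε.1 x = some y → α.1 y = some x := by
    intro ε
    constructor
    · intro h
      have hinv : ∀ x y : Fin n, ε.1 x = some y → α.1 y = some x := by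
        intro x y hxy
        have := congrFun (congrArg Subtype.val h) x
        simp only [PInj.dmul, PInj.comp, hxy] at this
        rcases Option.bind_eq_some_iff.mp this with ⟨z', h1, hez'⟩
        rcases Option.bind_eq_some_iff.mp h1 with ⟨w, hw, haz⟩
        cases Option.some.inj hw
        have := ε.2 x z' y hxy hez'
        rwa [← this] at haz
      refine ⟨?_, hinv⟩
      intro x hx
      rw [PInj.dom, Set.mem_setOf_eq, Option.isSome_iff_exists] at hx
      obtain ⟨y, hy⟩ := hx
      exact ⟨y, hinv x y hy⟩
    · rintro ⟨-, hinv⟩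
      apply Subtype.ext
      funext x
      simp only [PInj.dmul, PInj.comp]
      cases hx : ε.1 x with
      | none => simp
      | some y =>
        have := hinv x y hx
        simp [hx, this]
  refine ⟨key, ⟨?_⟩⟩
  refine
    { toFun := fun ε => ⟨ε.1.dom, ((key ε.1).mp ε.2).1⟩
      invFun := fun A => ⟨restr α A.1, ?_⟩
      left_inv := ?_
      right_inv := ?_ }
  · rw [key]
    constructor
    · intro x hx
      rw [PInj.dom, Set.mem_setOf_eq, Option.isSome_iff_exists] at hx
      obtain ⟨y, hy⟩ := hx
      simp only [restr] at hy
      split at hy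
      · exact ⟨y, pinv_spec α hy⟩
      · simp at hy
    · intro x y hxy
      simp only [restr] at hxy
      split at hxy
      · exact pinv_spec α hxy
      · simp at hxy
  · rintro ⟨ε, hε⟩
    apply Subtype.ext
    apply Subtype.ext
    funext x
    simp only [restr]
    have hinv := ((key ε).mp hε).2
    cases hx : ε.1 x with
    | none =>
      rw [if_neg]
      rw [PInj.dom, Set.mem_setOf_eq, hx]
      simp
    | some y =>
      rw [if_pos, pinv_eq α (hinv x y hx)]
      rw [PInj.dom, Set.mem_setOf_eq, hx]
      simp
  · rintro ⟨A, hA⟩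
    apply Subtype.ext
    ext x
    simp only [PInj.dom, restr, Set.mem_setOf_eq]
    constructor
    · intro h
      by_contra hxA
      rw [if_neg hxA] at h
      simp at h
    · intro hxA
      rw [if_pos hxA]
      obtain ⟨y, hy⟩ := hA hxA
      rw [pinv_eq α hy]
      simp
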